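/- Define C_QPSK(ρ) = log 4 − √(2/π) ∫_{-∞}^{∞} e^{-y²/2} log(1 + e^{-2(ρ + √ρ · y)}) dy for ρ ≥ 0. Then for every ρ ≥ 0, C_QPSK(ρ) ≥ ρ − ρ². -/

import Mathlib

open MeasureTheory

open Real

section AuxGauss

lemma gauss_rw (y : ℝ) : Real.exp (-y ^ 2 / 2) = Real.exp (-(1/2) * y ^ 2) := by ring_nf

lemma I0 : ∫ y : ℝ, Real.exp (-y ^ 2 / 2) = Real.sqrt (2 * Real.pi) := by
  simp_rw [gauss_rw]
  rw [integral_gaussian]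
  congr 1
  rw [div_div_eq_mul_div]
  ring

lemma I0int : Integrable fun y : ℝ => Real.exp (-y ^ 2 / 2) := by
  simp_rw [gauss_rw]
  exact integrable_exp_neg_mul_sq (by norm_num)

lemma I1int : Integrable fun y : ℝ => y * Real.exp (-y ^ 2 / 2) := by
  simp_rw [gauss_rw]
  exact integrable_mul_exp_neg_mul_sq (by norm_num)

lemma I2int : Integrable fun y : ℝ => y ^ 2 * Real.exp (-y ^ 2 / 2) := by
  have h := integrable_rpow_mul_exp_neg_mul_sq (b := 1/2) (by norm_num) (s := 2) (by norm_num)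
  have e : (fun x : ℝ => x ^ (2:ℝ) * Real.exp (-(1/2) * x ^ 2))
      = fun y : ℝ => y ^ 2 * Real.exp (-y ^ 2 / 2) := by
    ext y
    rw [Real.rpow_two]
    ring_nf
  rwa [e] at h

lemma I1 : ∫ y : ℝ, y * Real.exp (-y ^ 2 / 2) = 0 := by
  have h := integral_neg_eq_self (fun y : ℝ => y * Real.exp (-y ^ 2 / 2)) volume
  simp only [neg_sq] at h
  have : ∫ y : ℝ, -y * Real.exp (-y ^ 2 / 2) = - ∫ y : ℝ, y * Real.exp (-y^2/2) := by
    rw [← integral_neg]; congr 1; ext y; ring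
  rw [this] at h
  linarith

lemma I2 : ∫ y : ℝ, y ^ 2 * Real.exp (-y ^ 2 / 2) = Real.sqrt (2 * Real.pi) := by
  have hd : ∀ y : ℝ, HasDerivAt (fun y : ℝ => y * Real.exp (-y ^ 2 / 2))
      (Real.exp (-y ^ 2 / 2) - y ^ 2 * Real.exp (-y ^ 2 / 2)) y := by
    intro y
    have h1 : HasDerivAt (fun y : ℝ => -y ^ 2 / 2) (-y) y := by
      have := ((hasDerivAt_pow 2 y).neg).div_const 2
      exact this.congr_deriv (by push_cast; ring)
    have := (hasDerivAt_id y).mul (h1.exp)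
    exact this.congr_deriv (by simp; ring)
  have hint : Integrable (fun y : ℝ => Real.exp (-y ^ 2 / 2) - y ^ 2 * Real.exp (-y ^ 2 / 2)) :=
    I0int.sub I2int
  have hF : Integrable (fun y : ℝ => y * Real.exp (-y ^ 2 / 2)) := I1int
  have h0 := integral_eq_zero_of_hasDerivAt_of_integrable hd hint hF
  rw [integral_sub I0int I2int, I0] at h0
  linarith

lemma log_bound (x : ℝ) :
    Real.log (1 + Real.exp (-2 * x)) ≤ Real.log 2 - x + x ^ 2 / 2 := by
  have h1 : (1 : ℝ) + Real.exp (-2 * x) = Real.exp (-x) * (2 * Real.cosh x) := by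
    rw [Real.cosh_eq]
    have : Real.exp (-x) * (2 * ((Real.exp x + Real.exp (-x)) / 2))
        = Real.exp (-x) * Real.exp x + Real.exp (-x) * Real.exp (-x) := by ring
    rw [this, ← Real.exp_add, ← Real.exp_add]
    norm_num
    ring_nf
  have hcosh : Real.log (Real.cosh x) ≤ x ^ 2 / 2 := by
    calc Real.log (Real.cosh x) ≤ Real.log (Real.exp (x ^ 2 / 2)) := by
          apply Real.log_le_log (Real.cosh_pos x) (Real.cosh_le_exp_half_sq x)
      _ = x ^ 2 / 2 := Real.log_exp _
  rw [h1, Real.log_mul (Real.exp_pos _).ne' (by positivity), Real.log_exp,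
    Real.log_mul two_ne_zero (Real.cosh_pos x).ne']
  linarith

lemma log_bound' (t : ℝ) : Real.log (1 + Real.exp t) ≤ Real.log 2 + |t| := by
  have h1 : (1 : ℝ) + Real.exp t ≤ 2 * Real.exp |t| := by
    have := Real.exp_le_exp.2 (le_abs_self t)
    have h2 := Real.one_le_exp (abs_nonneg t)
    linarith
  calc Real.log (1 + Real.exp t) ≤ Real.log (2 * Real.exp |t|) :=
        Real.log_le_log (by positivity) h1
    _ = Real.log 2 + |t| := by rw [Real.log_mul two_ne_zero (Real.exp_pos _).ne', Real.log_exp]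

lemma habsint : Integrable fun y : ℝ => |y| * Real.exp (-y ^ 2 / 2) := by
  have h := I1int.abs
  have e : (fun y : ℝ => |y * Real.exp (-y ^ 2 / 2)|)
      = fun y : ℝ => |y| * Real.exp (-y ^ 2 / 2) := by
    ext y
    rw [abs_mul, abs_of_nonneg (Real.exp_pos _).le]
  rwa [e] at h

lemma fint (ρ : ℝ) (hρ : 0 ≤ ρ) :
    Integrable (fun y : ℝ =>
      Real.exp (-y ^ 2 / 2) * Real.log (1 + Real.exp (-2 * (ρ + Real.sqrt ρ * y)))) := by
  have hcont : Continuous (fun y : ℝ =>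
      Real.exp (-y ^ 2 / 2) * Real.log (1 + Real.exp (-2 * (ρ + Real.sqrt ρ * y)))) := by
    apply Continuous.mul (by continuity)
    apply Continuous.log (by continuity)
    intro y
    positivity
  have hg : Integrable (fun y : ℝ =>
      (Real.log 2 + 2 * ρ) * Real.exp (-y ^ 2 / 2)
        + (2 * Real.sqrt ρ) * (|y| * Real.exp (-y ^ 2 / 2))) :=
    (I0int.const_mul _).add (habsint.const_mul _)
  apply hg.mono' hcont.aestronglyMeasurable
  refine Filter.Eventually.of_forall fun y => ?_
  have hlog0 : 0 ≤ Real.log (1 + Real.exp (-2 * (ρ + Real.sqrt ρ * y))) := by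
    apply Real.log_nonneg
    have := (Real.exp_pos (-2 * (ρ + Real.sqrt ρ * y))).le
    linarith
  rw [Real.norm_eq_abs, abs_of_nonneg (by positivity)]
  have hb := log_bound' (-2 * (ρ + Real.sqrt ρ * y))
  have habs : |-2 * (ρ + Real.sqrt ρ * y)| ≤ 2 * ρ + 2 * Real.sqrt ρ * |y| := by
    rw [abs_mul]
    have : |ρ + Real.sqrt ρ * y| ≤ ρ + Real.sqrt ρ * |y| := by
      calc |ρ + Real.sqrt ρ * y| ≤ |ρ| + |Real.sqrt ρ * y| := abs_add_le _ _
        _ = ρ + Real.sqrt ρ * |y| := by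
            rw [abs_of_nonneg hρ, abs_mul, abs_of_nonneg (Real.sqrt_nonneg ρ)]
    have h2 : |(-2 : ℝ)| = 2 := by norm_num
    rw [h2]
    linarith
  have hE := (Real.exp_pos (-y ^ 2 / 2)).le
  calc Real.exp (-y ^ 2 / 2) * Real.log (1 + Real.exp (-2 * (ρ + Real.sqrt ρ * y)))
      ≤ Real.exp (-y ^ 2 / 2) * (Real.log 2 + (2 * ρ + 2 * Real.sqrt ρ * |y|)) := by
        apply mul_le_mul_of_nonneg_left _ hE
        linarith
    _ = (Real.log 2 + 2 * ρ) * Real.exp (-y ^ 2 / 2)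
        + (2 * Real.sqrt ρ) * (|y| * Real.exp (-y ^ 2 / 2)) := by ring

end AuxGauss

/-- `C_QPSK ρ = log 4 − √(2/π) ∫ℝ e^{-y²/2} log (1 + e^{-2(ρ + √ρ · y)}) dy`, the achievable
mutual information for QPSK transmission over an AWGN channel with SNR `ρ`. -/
noncomputable def C_QPSK (ρ : ℝ) : ℝ :=
  Real.log 4 - Real.sqrt (2 / Real.pi) *
    ∫ y : ℝ, Real.exp (-y ^ 2 / 2) * Real.log (1 + Real.exp (-2 * (ρ + Real.sqrt ρ * y)))

/-- For every `ρ ≥ 0`, `C_QPSK ρ ≥ ρ − ρ²`. -/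
theorem C_QPSK_ge_sub_sq (ρ : ℝ) (hρ : 0 ≤ ρ) : ρ - ρ ^ 2 ≤ C_QPSK ρ := by
  set a := Real.sqrt ρ with ha
  have ha2 : a ^ 2 = ρ := Real.sq_sqrt hρ
  have expand : ∀ y : ℝ,
      Real.exp (-y ^ 2 / 2) * (Real.log 2 - (ρ + a * y) + (ρ + a * y) ^ 2 / 2)
      = (Real.log 2 - ρ + ρ ^ 2 / 2) * Real.exp (-y ^ 2 / 2)
        + (ρ * a - a) * (y * Real.exp (-y ^ 2 / 2))
        + (ρ / 2) * (y ^ 2 * Real.exp (-y ^ 2 / 2)) := by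
    intro y
    rw [show ρ = a ^ 2 from ha2.symm]
    ring
  have hHint : Integrable (fun y : ℝ =>
      Real.exp (-y ^ 2 / 2) * (Real.log 2 - (ρ + a * y) + (ρ + a * y) ^ 2 / 2)) := by
    have h := ((I0int.const_mul (Real.log 2 - ρ + ρ ^ 2 / 2)).add
        (I1int.const_mul (ρ * a - a))).add (I2int.const_mul (ρ / 2))
    exact h.congr (Filter.Eventually.of_forall fun y => (expand y).symm)
  have hH : (∫ y : ℝ, Real.exp (-y ^ 2 / 2) * (Real.log 2 - (ρ + a * y) + (ρ + a * y) ^ 2 / 2))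
      = Real.sqrt (2 * Real.pi) * (Real.log 2 - ρ / 2 + ρ ^ 2 / 2) := by
    rw [integral_congr_ae (Filter.Eventually.of_forall expand)]
    have h1 : Integrable (fun y : ℝ =>
        (Real.log 2 - ρ + ρ ^ 2 / 2) * Real.exp (-y ^ 2 / 2)) := I0int.const_mul _
    have h2 : Integrable (fun y : ℝ =>
        (ρ * a - a) * (y * Real.exp (-y ^ 2 / 2))) := I1int.const_mul _
    have h3 : Integrable (fun y : ℝ =>
        (ρ / 2) * (y ^ 2 * Real.exp (-y ^ 2 / 2))) := I2int.const_mul _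
    have h12 : Integrable (fun y : ℝ =>
        (Real.log 2 - ρ + ρ ^ 2 / 2) * Real.exp (-y ^ 2 / 2)
          + (ρ * a - a) * (y * Real.exp (-y ^ 2 / 2))) := h1.add h2
    rw [integral_add h12 h3, integral_add h1 h2,
      integral_const_mul, integral_const_mul, integral_const_mul, I0, I1, I2]
    ring
  have hmono : (∫ y : ℝ, Real.exp (-y ^ 2 / 2) *
        Real.log (1 + Real.exp (-2 * (ρ + a * y))))
      ≤ ∫ y : ℝ, Real.exp (-y ^ 2 / 2) * (Real.log 2 - (ρ + a * y) + (ρ + a * y) ^ 2 / 2) := by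
    apply integral_mono (fint ρ hρ) hHint
    intro y
    exact mul_le_mul_of_nonneg_left (log_bound (ρ + a * y)) (Real.exp_pos _).le
  have hπ : (0 : ℝ) < Real.pi := Real.pi_pos
  have hc : Real.sqrt (2 / Real.pi) * Real.sqrt (2 * Real.pi) = 2 := by
    rw [← Real.sqrt_mul (by positivity)]
    rw [show 2 / Real.pi * (2 * Real.pi) = 4 by field_simp; ring]
    rw [show (4 : ℝ) = 2 ^ 2 by norm_num, Real.sqrt_sq (by norm_num)]
  have hlog4 : Real.log 4 = 2 * Real.log 2 := by
    rw [show (4 : ℝ) = 2 ^ 2 by norm_num, Real.log_pow]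
    push_cast; ring
  have hs : (0 : ℝ) ≤ Real.sqrt (2 / Real.pi) := Real.sqrt_nonneg _
  have key : Real.sqrt (2 / Real.pi) *
      (∫ y : ℝ, Real.exp (-y ^ 2 / 2) * Real.log (1 + Real.exp (-2 * (ρ + a * y))))
      ≤ 2 * (Real.log 2 - ρ / 2 + ρ ^ 2 / 2) := by
    calc Real.sqrt (2 / Real.pi) *
        (∫ y : ℝ, Real.exp (-y ^ 2 / 2) * Real.log (1 + Real.exp (-2 * (ρ + a * y))))
        ≤ Real.sqrt (2 / Real.pi) *
          ∫ y : ℝ, Real.exp (-y ^ 2 / 2) * (Real.log 2 - (ρ + a * y) + (ρ + a * y) ^ 2 / 2) :=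
          mul_le_mul_of_nonneg_left hmono hs
      _ = 2 * (Real.log 2 - ρ / 2 + ρ ^ 2 / 2) := by rw [hH, ← mul_assoc, hc]
  rw [C_QPSK]
  rw [← ha, hlog4]
  linarith
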